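/- If each component of a complex vector field F : ℝ × ℝ³ → ℂ³ solving ∂F/∂t = i·curl F is C², then each real component of Re F and Im F satisfies the wave equation ∂²u/∂t² = Δu. -/

import Mathlib

/-- Partial derivative in direction `i` of a real scalar field on `ℝ³`. -/
noncomputable def pd (i : Fin 3) (f : (Fin 3 → ℝ) → ℝ) (x : Fin 3 → ℝ) : ℝ :=
  deriv (fun s => f (Function.update x i s)) (x i)

/-- Partial derivative in direction `i` of a complex scalar field on `ℝ³`. -/
noncomputable def cpd (i : Fin 3) (f : (Fin 3 → ℝ) → ℂ) (x : Fin 3 → ℝ) : ℂ :=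
  deriv (fun s => f (Function.update x i s)) (x i)

/-- The curl of a complex vector field on `ℝ³` (componentwise on real/imaginary parts). -/
noncomputable def ccurl3 (V : (Fin 3 → ℝ) → Fin 3 → ℂ) (x : Fin 3 → ℝ) : Fin 3 → ℂ :=
  ![cpd 1 (fun y => V y 2) x - cpd 2 (fun y => V y 1) x,
    cpd 2 (fun y => V y 0) x - cpd 0 (fun y => V y 2) x,
    cpd 0 (fun y => V y 1) x - cpd 1 (fun y => V y 0) x]

/-- The divergence of a complex vector field on `ℝ³`. -/
noncomputable def cdiv3 (V : (Fin 3 → ℝ) → Fin 3 → ℂ) (x : Fin 3 → ℝ) : ℂ :=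
  ∑ i, cpd i (fun y => V y i) x

open Complex ContinuousLinearMap

abbrev Pt3 := ℝ × (Fin 3 → ℝ)

def we0 : Pt3 := (1, 0)
def weS (j : Fin 3) : Pt3 := (0, Pi.single j 1)

lemma line_hasDerivAt (x : Fin 3 → ℝ) (j : Fin 3) :
    HasDerivAt (fun s => Function.update x j s) (Pi.single j 1) (x j) := by
  rw [hasDerivAt_pi]
  intro k
  rcases eq_or_ne k j with h | h
  · subst h
    simpa [Function.update_self, Pi.single_eq_same] using hasDerivAt_id' (x k)
  · simpa [Function.update_of_ne h, Pi.single_eq_of_ne h] using hasDerivAt_const (x j) (x k)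

lemma tline_hasDerivAt {f : Pt3 → ℂ} {f' : Pt3 →L[ℝ] ℂ} {t : ℝ} {x : Fin 3 → ℝ}
    (hf : HasFDerivAt f f' (t, x)) :
    HasDerivAt (fun s => f (s, x)) (f' we0) t :=
  hf.comp_hasDerivAt t ((hasDerivAt_id t).prodMk (hasDerivAt_const t x))

lemma xline_hasDerivAt {f : Pt3 → ℂ} {f' : Pt3 →L[ℝ] ℂ} {t : ℝ} {x : Fin 3 → ℝ}
    (hf : HasFDerivAt f f' (t, x)) (j : Fin 3) :
    HasDerivAt (fun s => f (t, Function.update x j s)) (f' (weS j)) (x j) := by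
  have h1 : HasFDerivAt f f' (t, Function.update x j (x j)) := by
    rwa [Function.update_eq_self]
  exact h1.comp_hasDerivAt (x j) ((hasDerivAt_const (x j) t).prodMk (line_hasDerivAt x j))

lemma hasDerivAt_re' {g : ℝ → ℂ} {c : ℂ} {t : ℝ} (hg : HasDerivAt g c t) :
    HasDerivAt (fun s => (g s).re) c.re t :=
  Complex.reCLM.hasFDerivAt.comp_hasDerivAt t hg

lemma hasDerivAt_im' {g : ℝ → ℂ} {c : ℂ} {t : ℝ} (hg : HasDerivAt g c t) :
    HasDerivAt (fun s => (g s).im) c.im t :=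
  Complex.imCLM.hasFDerivAt.comp_hasDerivAt t hg

section Main

variable (F : ℝ → (Fin 3 → ℝ) → Fin 3 → ℂ)

/-- The `k`-th component of `F` as a function on space-time. -/
noncomputable def Gc (k : Fin 3) : Pt3 → ℂ := fun p => F p.1 p.2 k

/-- The second Fréchet derivative of the `k`-th component. -/
noncomputable def Bc (k : Fin 3) (p : Pt3) : Pt3 →L[ℝ] Pt3 →L[ℝ] ℂ :=
  fderiv ℝ (fderiv ℝ (Gc F k)) p

variable (hF : ContDiff ℝ 2 (fun p : Pt3 => F p.1 p.2))

include hF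

lemma hGsm (k : Fin 3) : ContDiff ℝ 2 (Gc F k) :=
  (ContinuousLinearMap.proj (R := ℝ) (φ := fun _ : Fin 3 => ℂ) k).contDiff.comp hF

lemma hGd (k : Fin 3) (p : Pt3) : HasFDerivAt (Gc F k) (fderiv ℝ (Gc F k) p) p :=
  (((hGsm F hF k).differentiable (by norm_num)) p).hasFDerivAt

lemma hGd' (k : Fin 3) (p : Pt3) :
    HasFDerivAt (fderiv ℝ (Gc F k)) (Bc F k p) p :=
  ((((hGsm F hF k).fderiv_right (m := 1) (by norm_num)).differentiable (by norm_num)) p).hasFDerivAt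

lemma hsym (k : Fin 3) (p : Pt3) (v w : Pt3) : Bc F k p v w = Bc F k p w v :=
  second_derivative_symmetric (hGd F hF k) (hGd' F hF k p) v w

lemma hPhi (k : Fin 3) (v : Pt3) (p : Pt3) :
    HasFDerivAt (fun q => fderiv ℝ (Gc F k) q v)
      ((ContinuousLinearMap.apply ℝ ℂ v).comp (Bc F k p)) p :=
  (ContinuousLinearMap.apply ℝ ℂ v).hasFDerivAt.comp p (hGd' F hF k p)


lemma key2 (t : ℝ) (x : Fin 3 → ℝ) (j k : Fin 3) :
    cpd j (fun y => F t y k) x = fderiv ℝ (Gc F k) (t, x) (weS j) :=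
  (xline_hasDerivAt (hGd F hF k (t, x)) j).deriv

variable (heq : ∀ t x, deriv (fun s => F s x) t = fun i => Complex.I * ccurl3 (F t) x i)
include heq

lemma key1 (t : ℝ) (x : Fin 3 → ℝ) (i : Fin 3) :
    fderiv ℝ (Gc F i) (t, x) we0 = Complex.I * ccurl3 (F t) x i := by
  have hpi : HasDerivAt (fun s => F s x) (fun i => fderiv ℝ (Gc F i) (t, x) we0) t :=
    hasDerivAt_pi.mpr fun i => tline_hasDerivAt (hGd F hF i (t, x))
  have h := hpi.deriv
  rw [heq t x] at h
  exact (congrFun h i).symm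

lemma hfun0 : (fun q : Pt3 => fderiv ℝ (Gc F 0) q we0)
    = fun q => Complex.I • (fderiv ℝ (Gc F 2) q (weS 1) - fderiv ℝ (Gc F 1) q (weS 2)) := by
  funext q
  have h := key1 F hF heq q.1 q.2 0
  simp only [ccurl3, Matrix.cons_val_zero] at h
  rw [key2 F hF q.1 q.2 1 2, key2 F hF q.1 q.2 2 1] at h
  simpa [smul_eq_mul] using h

lemma hfun1 : (fun q : Pt3 => fderiv ℝ (Gc F 1) q we0)
    = fun q => Complex.I • (fderiv ℝ (Gc F 0) q (weS 2) - fderiv ℝ (Gc F 2) q (weS 0)) := by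
  funext q
  have h := key1 F hF heq q.1 q.2 1
  simp only [ccurl3, Matrix.cons_val_one, Matrix.head_cons] at h
  rw [key2 F hF q.1 q.2 2 0, key2 F hF q.1 q.2 0 2] at h
  simpa [smul_eq_mul] using h

lemma hfun2 : (fun q : Pt3 => fderiv ℝ (Gc F 2) q we0)
    = fun q => Complex.I • (fderiv ℝ (Gc F 1) q (weS 0) - fderiv ℝ (Gc F 0) q (weS 1)) := by
  funext q
  have h := key1 F hF heq q.1 q.2 2
  simp only [ccurl3, Matrix.cons_val_two, Matrix.tail_cons, Matrix.head_cons] at h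
  rw [key2 F hF q.1 q.2 0 1, key2 F hF q.1 q.2 1 0] at h
  simpa [smul_eq_mul] using h

lemma Bcurl0 (p : Pt3) (w : Pt3) :
    Bc F 0 p w we0 = Complex.I * (Bc F 2 p w (weS 1) - Bc F 1 p w (weS 2)) := by
  have hL := hPhi F hF 0 we0 p
  rw [hfun0 F hF heq] at hL
  have hR : HasFDerivAt
      (fun q => Complex.I • (fderiv ℝ (Gc F 2) q (weS 1) - fderiv ℝ (Gc F 1) q (weS 2)))
      (Complex.I • ((ContinuousLinearMap.apply ℝ ℂ (weS 1)).comp (Bc F 2 p)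
        - (ContinuousLinearMap.apply ℝ ℂ (weS 2)).comp (Bc F 1 p))) p :=
    ((hPhi F hF 2 (weS 1) p).sub (hPhi F hF 1 (weS 2) p)).const_smul Complex.I
  have h := congrArg (fun L : Pt3 →L[ℝ] ℂ => L w) (hL.unique hR)
  simpa [smul_eq_mul, mul_sub] using h

lemma Bcurl1 (p : Pt3) (w : Pt3) :
    Bc F 1 p w we0 = Complex.I * (Bc F 0 p w (weS 2) - Bc F 2 p w (weS 0)) := by
  have hL := hPhi F hF 1 we0 p
  rw [hfun1 F hF heq] at hL
  have hR : HasFDerivAt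
      (fun q => Complex.I • (fderiv ℝ (Gc F 0) q (weS 2) - fderiv ℝ (Gc F 2) q (weS 0)))
      (Complex.I • ((ContinuousLinearMap.apply ℝ ℂ (weS 2)).comp (Bc F 0 p)
        - (ContinuousLinearMap.apply ℝ ℂ (weS 0)).comp (Bc F 2 p))) p :=
    ((hPhi F hF 0 (weS 2) p).sub (hPhi F hF 2 (weS 0) p)).const_smul Complex.I
  have h := congrArg (fun L : Pt3 →L[ℝ] ℂ => L w) (hL.unique hR)
  simpa [smul_eq_mul, mul_sub] using h

lemma Bcurl2 (p : Pt3) (w : Pt3) :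
    Bc F 2 p w we0 = Complex.I * (Bc F 1 p w (weS 0) - Bc F 0 p w (weS 1)) := by
  have hL := hPhi F hF 2 we0 p
  rw [hfun2 F hF heq] at hL
  have hR : HasFDerivAt
      (fun q => Complex.I • (fderiv ℝ (Gc F 1) q (weS 0) - fderiv ℝ (Gc F 0) q (weS 1)))
      (Complex.I • ((ContinuousLinearMap.apply ℝ ℂ (weS 0)).comp (Bc F 1 p)
        - (ContinuousLinearMap.apply ℝ ℂ (weS 1)).comp (Bc F 0 p))) p :=
    ((hPhi F hF 1 (weS 0) p).sub (hPhi F hF 0 (weS 1) p)).const_smul Complex.I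
  have h := congrArg (fun L : Pt3 →L[ℝ] ℂ => L w) (hL.unique hR)
  simpa [smul_eq_mul, mul_sub] using h


omit heq

lemma pdre (t : ℝ) (x : Fin 3 → ℝ) (j k : Fin 3) :
    pd j (fun y => (F t y k).re) x = (fderiv ℝ (Gc F k) (t, x) (weS j)).re :=
  (hasDerivAt_re' (xline_hasDerivAt (hGd F hF k (t, x)) j)).deriv

lemma pdim (t : ℝ) (x : Fin 3 → ℝ) (j k : Fin 3) :
    pd j (fun y => (F t y k).im) x = (fderiv ℝ (Gc F k) (t, x) (weS j)).im :=
  (hasDerivAt_im' (xline_hasDerivAt (hGd F hF k (t, x)) j)).deriv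

variable (hdivRe : ∀ t x, (∑ i, pd i (fun y => (F t y i).re) x) = 0)
variable (hdivIm : ∀ t x, (∑ i, pd i (fun y => (F t y i).im) x) = 0)
include hdivRe hdivIm

lemma divid (t : ℝ) (x : Fin 3 → ℝ) :
    (∑ j, fderiv ℝ (Gc F j) (t, x) (weS j)) = 0 := by
  apply Complex.ext
  · rw [Complex.re_sum, Complex.zero_re, ← hdivRe t x]
    exact Finset.sum_congr rfl fun j _ => (pdre F hF t x j j).symm
  · rw [Complex.im_sum, Complex.zero_im, ← hdivIm t x]
    exact Finset.sum_congr rfl fun j _ => (pdim F hF t x j j).symm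

lemma Bdiv (p : Pt3) (w : Pt3) : (∑ j, Bc F j p w (weS j)) = 0 := by
  have hL : HasFDerivAt (fun q : Pt3 => ∑ j, fderiv ℝ (Gc F j) q (weS j))
      (∑ j, (ContinuousLinearMap.apply ℝ ℂ (weS j)).comp (Bc F j p)) p :=
    HasFDerivAt.fun_sum fun j _ => hPhi F hF j (weS j) p
  have hfun : (fun q : Pt3 => ∑ j, fderiv ℝ (Gc F j) q (weS j)) = fun _ => (0 : ℂ) :=
    funext fun q => divid F hF hdivRe hdivIm q.1 q.2
  rw [hfun] at hL
  have h := congrArg (fun L : Pt3 →L[ℝ] ℂ => L w) (hL.unique (hasFDerivAt_const 0 p))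
  simpa using h

include heq

lemma mainB (i : Fin 3) (p : Pt3) :
    Bc F i p we0 we0 = ∑ j, Bc F i p (weS j) (weS j) := by
  have hd0 := Bdiv F hF hdivRe hdivIm p (weS 0)
  have hd1 := Bdiv F hF hdivRe hdivIm p (weS 1)
  have hd2 := Bdiv F hF hdivRe hdivIm p (weS 2)
  rw [Fin.sum_univ_three] at hd0 hd1 hd2 ⊢
  fin_cases i
  · show Bc F 0 p we0 we0 = Bc F 0 p (weS 0) (weS 0) + Bc F 0 p (weS 1) (weS 1) + Bc F 0 p (weS 2) (weS 2)
    rw [Bcurl0 F hF heq p we0, hsym F hF 2 p we0 (weS 1), hsym F hF 1 p we0 (weS 2),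
      Bcurl2 F hF heq p (weS 1), Bcurl1 F hF heq p (weS 2),
      hsym F hF 1 p (weS 1) (weS 0), hsym F hF 2 p (weS 2) (weS 0)]
    linear_combination (Bc F 1 p (weS 0) (weS 1) + Bc F 2 p (weS 0) (weS 2)
      - Bc F 0 p (weS 1) (weS 1) - Bc F 0 p (weS 2) (weS 2)) * Complex.I_mul_I - hd0
  · show Bc F 1 p we0 we0 = Bc F 1 p (weS 0) (weS 0) + Bc F 1 p (weS 1) (weS 1) + Bc F 1 p (weS 2) (weS 2)
    rw [Bcurl1 F hF heq p we0, hsym F hF 0 p we0 (weS 2), hsym F hF 2 p we0 (weS 0),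
      Bcurl0 F hF heq p (weS 2), Bcurl2 F hF heq p (weS 0),
      hsym F hF 2 p (weS 2) (weS 1), hsym F hF 0 p (weS 0) (weS 1)]
    linear_combination (Bc F 2 p (weS 1) (weS 2) + Bc F 0 p (weS 1) (weS 0)
      - Bc F 1 p (weS 2) (weS 2) - Bc F 1 p (weS 0) (weS 0)) * Complex.I_mul_I - hd1
  · show Bc F 2 p we0 we0 = Bc F 2 p (weS 0) (weS 0) + Bc F 2 p (weS 1) (weS 1) + Bc F 2 p (weS 2) (weS 2)
    rw [Bcurl2 F hF heq p we0, hsym F hF 1 p we0 (weS 0), hsym F hF 0 p we0 (weS 1),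
      Bcurl1 F hF heq p (weS 0), Bcurl0 F hF heq p (weS 1),
      hsym F hF 0 p (weS 0) (weS 2), hsym F hF 1 p (weS 1) (weS 2)]
    linear_combination (Bc F 0 p (weS 2) (weS 0) + Bc F 1 p (weS 2) (weS 1)
      - Bc F 2 p (weS 0) (weS 0) - Bc F 2 p (weS 1) (weS 1)) * Complex.I_mul_I - hd2

end Main

/-- If `F` is a `C²` solution of `∂F/∂t = i·curl F` with divergence-free real and
imaginary parts, then each real component of `Re F` and `Im F` satisfies the wave
equation `∂²u/∂t² = Δu`. -/
theorem components_satisfy_wave_equation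
    (F : ℝ → (Fin 3 → ℝ) → Fin 3 → ℂ)
    (hF : ContDiff ℝ 2 (fun p : ℝ × (Fin 3 → ℝ) => F p.1 p.2))
    (heq : ∀ t x, deriv (fun s => F s x) t = fun i => Complex.I * ccurl3 (F t) x i)
    (hdivRe : ∀ t x, (∑ i, pd i (fun y => (F t y i).re) x) = 0)
    (hdivIm : ∀ t x, (∑ i, pd i (fun y => (F t y i).im) x) = 0) :
    ∀ (i : Fin 3) (t : ℝ) (x : Fin 3 → ℝ),
      (deriv (fun s => deriv (fun r => (F r x i).re) s) t =
        ∑ j, pd j (fun y => pd j (fun z => (F t z i).re) y) x) ∧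
      (deriv (fun s => deriv (fun r => (F r x i).im) s) t =
        ∑ j, pd j (fun y => pd j (fun z => (F t z i).im) y) x) := by
  intro i t x
  have hmain := mainB F hF heq hdivRe hdivIm i (t, x)
  have houter : HasDerivAt (fun s => fderiv ℝ (Gc F i) (s, x) we0)
      (Bc F i (t, x) we0 we0) t := by
    simpa using tline_hasDerivAt (hPhi F hF i we0 (t, x))
  have hinre : ∀ s, deriv (fun r => (F r x i).re) s = (fderiv ℝ (Gc F i) (s, x) we0).re :=
    fun s => (hasDerivAt_re' (tline_hasDerivAt (hGd F hF i (s, x)))).deriv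
  have hinim : ∀ s, deriv (fun r => (F r x i).im) s = (fderiv ℝ (Gc F i) (s, x) we0).im :=
    fun s => (hasDerivAt_im' (tline_hasDerivAt (hGd F hF i (s, x)))).deriv
  have houtre : ∀ j : Fin 3,
      pd j (fun y => (fderiv ℝ (Gc F i) (t, y) (weS j)).re) x
        = (Bc F i (t, x) (weS j) (weS j)).re := by
    intro j
    simpa [pd] using (hasDerivAt_re' (xline_hasDerivAt (hPhi F hF i (weS j) (t, x)) j)).deriv
  have houtim : ∀ j : Fin 3,
      pd j (fun y => (fderiv ℝ (Gc F i) (t, y) (weS j)).im) x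
        = (Bc F i (t, x) (weS j) (weS j)).im := by
    intro j
    simpa [pd] using (hasDerivAt_im' (xline_hasDerivAt (hPhi F hF i (weS j) (t, x)) j)).deriv
  constructor
  · have hL : deriv (fun s => deriv (fun r => (F r x i).re) s) t
        = (Bc F i (t, x) we0 we0).re := by
      have h := (hasDerivAt_re' houter).deriv
      simp only [hinre]
      exact h
    rw [hL, hmain, Complex.re_sum]
    refine Finset.sum_congr rfl fun j _ => ?_
    rw [show (fun y => pd j (fun z => (F t z i).re) y)
        = fun y => (fderiv ℝ (Gc F i) (t, y) (weS j)).re from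
      funext fun y => pdre F hF t y j i]
    exact (houtre j).symm
  · have hL : deriv (fun s => deriv (fun r => (F r x i).im) s) t
        = (Bc F i (t, x) we0 we0).im := by
      have h := (hasDerivAt_im' houter).deriv
      simp only [hinim]
      exact h
    rw [hL, hmain, Complex.im_sum]
    refine Finset.sum_congr rfl fun j _ => ?_
    rw [show (fun y => pd j (fun z => (F t z i).im) y)
        = fun y => (fderiv ℝ (Gc F i) (t, y) (weS j)).im from
      funext fun y => pdim F hF t y j i]
    exact (houtim j).symm
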